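/- Let F be a field, let S be a finite index set, and for each i ∈ S let a_i, c_i ∈ ℕ with (a_i, c_i) ≠ (0,0) and p_i ∈ ℕ². The persistence module associated with the γ-product ⊕_{i ∈ S} F[x,y]/(x^{a_i} y^{c_i})(−p_i) — the functor ℕ² → Vect_F whose value at (m,n) is the direct sum over i ∈ S of the spans of the classes of the appropriately shifted monomials, with transition maps induced by multiplication by monomials — is naturally isomorphic to the direct sum of hook interval modules ⊕_{i ∈ S} H_{p_i, p_i + (a_i, c_i)}. In particular, the γ-product is hook-decomposable. -/

import Mathlib

open MvPolynomial CategoryTheory DirectSum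

attribute [local instance 2000] Preorder.smallCategory

set_option synthInstance.maxHeartbeats 1000000
set_option maxHeartbeats 1000000

noncomputable section

/-! ### The shifted quotient modules `F[x,y]/(x^a y^c)(−p)` and their persistence modules -/

/-- The ideal of `F[x,y]` generated by the single monomial `x^a * y^c`. -/
def monomialIdeal (F : Type) [Field F] (a c : ℕ) :
    Ideal (MvPolynomial (Fin 2) F) :=
  Ideal.span {(X 0 : MvPolynomial (Fin 2) F) ^ a * (X 1 : MvPolynomial (Fin 2) F) ^ c}

/-- The class of the monomial `x^m y^n` in the quotient `F[x,y]/(x^a y^c)`. -/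
def monomialClass (F : Type) [Field F] (a c m n : ℕ) :
    MvPolynomial (Fin 2) F ⧸ monomialIdeal F a c :=
  Ideal.Quotient.mk (monomialIdeal F a c)
    ((X 0 : MvPolynomial (Fin 2) F) ^ m * (X 1 : MvPolynomial (Fin 2) F) ^ n)

/-- The bidegree-`r` piece of the shifted module `F[x,y]/(x^a y^c)(−p)`:
the `F`-span of the class of `x^{r.1−p.1} y^{r.2−p.2}` when `r ≥ p`, zero otherwise. -/
def quotientPiece (F : Type) [Field F] (a c : ℕ) (p r : ℕ × ℕ) :
    Submodule F (MvPolynomial (Fin 2) F ⧸ monomialIdeal F a c) :=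
  if p ≤ r then Submodule.span F {monomialClass F a c (r.1 - p.1) (r.2 - p.2)} else ⊥

/-- Multiplication by `x^s y^t` as an `F`-linear endomorphism of `F[x,y]/(x^a y^c)`. -/
def mulMonomial (F : Type) [Field F] (a c s t : ℕ) :
    (MvPolynomial (Fin 2) F ⧸ monomialIdeal F a c) →ₗ[F]
      (MvPolynomial (Fin 2) F ⧸ monomialIdeal F a c) :=
  (LinearMap.lsmul (MvPolynomial (Fin 2) F) (MvPolynomial (Fin 2) F ⧸ monomialIdeal F a c)
      ((X 0 : MvPolynomial (Fin 2) F) ^ s * (X 1 : MvPolynomial (Fin 2) F) ^ t)).restrictScalars F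

lemma mulMonomial_class (F : Type) [Field F] (a c s t m n : ℕ) :
    mulMonomial F a c s t (monomialClass F a c m n) = monomialClass F a c (s + m) (t + n) := by
  show Ideal.Quotient.mk (monomialIdeal F a c)
      ((((X 0 : MvPolynomial (Fin 2) F) ^ s * (X 1 : MvPolynomial (Fin 2) F) ^ t)) *
        ((X 0 : MvPolynomial (Fin 2) F) ^ m * (X 1 : MvPolynomial (Fin 2) F) ^ n)) = _
  rw [mul_mul_mul_comm, ← pow_add, ← pow_add]
  rfl

lemma quotientPiece_mapsTo (F : Type) [Field F] (a c : ℕ) (p : ℕ × ℕ) {r r' : ℕ × ℕ}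
    (h : r ≤ r') :
    ∀ x ∈ quotientPiece F a c p r,
      mulMonomial F a c (r'.1 - r.1) (r'.2 - r.2) x ∈ quotientPiece F a c p r' := by
  intro x hx
  by_cases hp : p ≤ r
  · have hp' : p ≤ r' := hp.trans h
    rw [quotientPiece, if_pos hp] at hx
    rw [quotientPiece, if_pos hp']
    obtain ⟨k, rfl⟩ := Submodule.mem_span_singleton.mp hx
    rw [map_smul, mulMonomial_class, Nat.sub_add_sub_cancel h.1 hp.1,
      Nat.sub_add_sub_cancel h.2 hp.2]
    exact Submodule.smul_mem _ k (Submodule.mem_span_singleton_self _)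
  · rw [quotientPiece, if_neg hp, Submodule.mem_bot] at hx
    subst hx
    simp only [map_zero]
    exact Submodule.zero_mem _

/-- Transition map of the persistence module associated with the shifted quotient. -/
def quotientPieceMap (F : Type) [Field F] (a c : ℕ) (p : ℕ × ℕ) {r r' : ℕ × ℕ} (h : r ≤ r') :
    quotientPiece F a c p r →ₗ[F] quotientPiece F a c p r' :=
  (mulMonomial F a c (r'.1 - r.1) (r'.2 - r.2)).restrict (quotientPiece_mapsTo F a c p h)

lemma quotientPieceMap_refl (F : Type) [Field F] (a c : ℕ) (p r : ℕ × ℕ) :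
    quotientPieceMap F a c p (le_refl r) = LinearMap.id := by
  ext x
  show mulMonomial F a c (r.1 - r.1) (r.2 - r.2) (x : _) = (x : _)
  simp [mulMonomial]

lemma quotientPieceMap_trans (F : Type) [Field F] (a c : ℕ) (p : ℕ × ℕ) {r r' r'' : ℕ × ℕ}
    (h1 : r ≤ r') (h2 : r' ≤ r'') :
    (quotientPieceMap F a c p h2).comp (quotientPieceMap F a c p h1) =
      quotientPieceMap F a c p (h1.trans h2) := by
  ext x
  show mulMonomial F a c _ _ (mulMonomial F a c _ _ (x : _)) = mulMonomial F a c _ _ (x : _)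
  simp only [mulMonomial, LinearMap.coe_restrictScalars, LinearMap.lsmul_apply, smul_smul]
  congr 1
  rw [mul_mul_mul_comm, ← pow_add, ← pow_add, Nat.sub_add_sub_cancel h2.1 h1.1,
    Nat.sub_add_sub_cancel h2.2 h1.2]

/-- The persistence module (functor `ℕ² ⥤ Vect_F`) associated with the shifted quotient
`F[x,y]/(x^a y^c)(−p)`: its value at `r` is the `F`-span of the class of the shifted
monomial `x^{r.1−p.1} y^{r.2−p.2}` (zero if `¬ r ≥ p`), and its transition maps are
induced by multiplication by monomials. -/
def quotientPieceFunctor (F : Type) [Field F] (a c : ℕ) (p : ℕ × ℕ) :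
    (ℕ × ℕ) ⥤ ModuleCat F where
  obj r := ModuleCat.of F (quotientPiece F a c p r)
  map {r r'} h := ModuleCat.ofHom (quotientPieceMap F a c p (leOfHom h))
  map_id r := ModuleCat.hom_ext (quotientPieceMap_refl F a c p r)
  map_comp {r r' r''} h1 h2 :=
    ModuleCat.hom_ext (quotientPieceMap_trans F a c p (leOfHom h1) (leOfHom h2)).symm

/-- The persistence module associated with the γ-product with data `(aᵢ, cᵢ, pᵢ)`:
its value at `r` is `⊕ᵢ` (span of the class of the shifted monomial in
`F[x,y]/(x^{aᵢ} y^{cᵢ})`, zero when `¬ r ≥ pᵢ`), with transition maps induced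
componentwise by multiplication by monomials. -/

def gammaSumMap (F : Type) [Field F] (S : Type) (a c : S → ℕ) (p : S → ℕ × ℕ)
    {r r' : ℕ × ℕ} (h : r ≤ r') :
    (⨁ (i : S), ↥(quotientPiece F (a i) (c i) (p i) r)) →ₗ[F]
      (⨁ (i : S), ↥(quotientPiece F (a i) (c i) (p i) r')) :=
  DFinsupp.mapRange.linearMap (fun i => quotientPieceMap F (a i) (c i) (p i) h)

lemma gammaSumMap_refl (F : Type) [Field F] (S : Type) (a c : S → ℕ) (p : S → ℕ × ℕ)
    (r : ℕ × ℕ) : gammaSumMap F S a c p (le_refl r) = LinearMap.id := by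
  have h1 : (fun i => quotientPieceMap F (a i) (c i) (p i) (le_refl r)) =
      (fun i : S => LinearMap.id) :=
    funext fun i => quotientPieceMap_refl F (a i) (c i) (p i) r
  rw [gammaSumMap, h1, DFinsupp.mapRange.linearMap_id]

lemma gammaSumMap_trans (F : Type) [Field F] (S : Type) (a c : S → ℕ) (p : S → ℕ × ℕ)
    {r r' r'' : ℕ × ℕ} (h1 : r ≤ r') (h2 : r' ≤ r'') :
    (gammaSumMap F S a c p h2).comp (gammaSumMap F S a c p h1) =
      gammaSumMap F S a c p (h1.trans h2) := by
  have he : (fun i => quotientPieceMap F (a i) (c i) (p i) (h1.trans h2)) =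
      (fun i => (quotientPieceMap F (a i) (c i) (p i) h2).comp
        (quotientPieceMap F (a i) (c i) (p i) h1)) :=
    funext fun i => (quotientPieceMap_trans F (a i) (c i) (p i) h1 h2).symm
  rw [gammaSumMap, gammaSumMap, gammaSumMap, he, DFinsupp.mapRange.linearMap_comp]

def gammaProductFunctor (F : Type) [Field F] (S : Type) (a c : S → ℕ) (p : S → ℕ × ℕ) :
    (ℕ × ℕ) ⥤ ModuleCat F where
  obj r :=
    letI : ∀ i, AddCommGroup ↥(quotientPiece F (a i) (c i) (p i) r) := fun i => inferInstance
    ModuleCat.of F (⨁ (i : S), ↥(quotientPiece F (a i) (c i) (p i) r))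
  map {r r'} h :=
    letI : ∀ i r, AddCommGroup ↥(quotientPiece F (a i) (c i) (p i) r) := fun i r => inferInstance
    ModuleCat.ofHom (gammaSumMap F S a c p (leOfHom h))
  map_id r := ModuleCat.hom_ext (gammaSumMap_refl F S a c p r)
  map_comp {r r' r''} h1 h2 :=
    ModuleCat.hom_ext (gammaSumMap_trans F S a c p (leOfHom h1) (leOfHom h2)).symm


/-! ### Interval persistence modules (hook modules and upper-set modules) -/

/-- The value of the interval module of `region` at `r`, realised as a submodule of `F`:
all of `F` for `r ∈ region`, and `0` otherwise. -/
def intervalPiece (F : Type) [Field F] (region : Set (ℕ × ℕ)) (r : ℕ × ℕ) :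
    Submodule F F :=
  letI := Classical.propDecidable (r ∈ region)
  if r ∈ region then ⊤ else ⊥

/-- The underlying endomorphism of `F` for a transition map into position `r'`:
the identity if `r' ∈ region` and zero otherwise. -/
def intervalMapAux (F : Type) [Field F] (region : Set (ℕ × ℕ)) (r' : ℕ × ℕ) :
    F →ₗ[F] F :=
  letI := Classical.propDecidable (r' ∈ region)
  if r' ∈ region then LinearMap.id else 0

lemma intervalMap_mapsTo (F : Type) [Field F] (region : Set (ℕ × ℕ)) (r r' : ℕ × ℕ) :
    ∀ x ∈ intervalPiece F region r, intervalMapAux F region r' x ∈ intervalPiece F region r' := by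
  classical
  intro x hx
  by_cases h : r' ∈ region
  · simp [intervalPiece, h]
  · rw [intervalPiece, if_neg h, intervalMapAux, if_neg h, LinearMap.zero_apply]
    exact Submodule.zero_mem _

/-- Transition map of the interval module: the identity between points of the region,
and zero otherwise. -/
def intervalMap (F : Type) [Field F] (region : Set (ℕ × ℕ)) (r r' : ℕ × ℕ) :
    intervalPiece F region r →ₗ[F] intervalPiece F region r' :=
  (intervalMapAux F region r').restrict (intervalMap_mapsTo F region r r')

lemma intervalMap_refl (F : Type) [Field F] (region : Set (ℕ × ℕ)) (r : ℕ × ℕ) :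
    intervalMap F region r r = LinearMap.id := by
  classical
  ext x
  show intervalMapAux F region r x.1 = x.1
  by_cases h : r ∈ region
  · simp [intervalMapAux, h]
  · have hx : x.1 = 0 := by
      have key : ∀ y : F, y ∈ intervalPiece F region r → y = 0 := fun y hy => by
        rwa [intervalPiece, if_neg h, Submodule.mem_bot] at hy
      exact key _ x.2
    simp [intervalMapAux, h, hx]

lemma intervalMap_trans (F : Type) [Field F] (region : Set (ℕ × ℕ))
    (hconv : ∀ {r r' r'' : ℕ × ℕ}, r ≤ r' → r' ≤ r'' →
      r ∈ region → r'' ∈ region → r' ∈ region)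
    {r r' r'' : ℕ × ℕ} (h1 : r ≤ r') (h2 : r' ≤ r'') :
    (intervalMap F region r' r'').comp (intervalMap F region r r') =
      intervalMap F region r r'' := by
  classical
  ext x
  show intervalMapAux F region r'' (intervalMapAux F region r' x.1) =
    intervalMapAux F region r'' x.1
  by_cases h'' : r'' ∈ region
  · by_cases h : r ∈ region
    · have h' : r' ∈ region := hconv h1 h2 h h''
      simp [intervalMapAux, h', h'']
    · have hx : x.1 = 0 := by
        have key : ∀ y : F, y ∈ intervalPiece F region r → y = 0 := fun y hy => by
          rwa [intervalPiece, if_neg h, Submodule.mem_bot] at hy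
        exact key _ x.2
      simp [intervalMapAux, hx]
  · simp [intervalMapAux, h'']

/-- The interval persistence module of a convex region of `ℕ²`: value `F` on the region
(zero elsewhere), identity transition maps within the region, zero maps otherwise. -/
def intervalFunctor (F : Type) [Field F] (region : Set (ℕ × ℕ))
    (hconv : ∀ {r r' r'' : ℕ × ℕ}, r ≤ r' → r' ≤ r'' →
      r ∈ region → r'' ∈ region → r' ∈ region) :
    (ℕ × ℕ) ⥤ ModuleCat F where
  obj r := ModuleCat.of F (intervalPiece F region r)
  map {r r'} _ := ModuleCat.ofHom (intervalMap F region r r')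
  map_id r := ModuleCat.hom_ext (intervalMap_refl F region r)
  map_comp {r r' r''} h1 h2 :=
    ModuleCat.hom_ext (intervalMap_trans F region hconv (leOfHom h1) (leOfHom h2)).symm


/-- The hook region `H(p,q) = {r : r ≥ p, ¬ r ≥ q}`. -/
def hookRegion (p q : ℕ × ℕ) : Set (ℕ × ℕ) := {r | p ≤ r ∧ ¬ q ≤ r}

lemma hookRegion_convex {p q r r' r'' : ℕ × ℕ} (h1 : r ≤ r') (h2 : r' ≤ r'')
    (hr : r ∈ hookRegion p q) (hr'' : r'' ∈ hookRegion p q) : r' ∈ hookRegion p q :=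
  ⟨hr.1.trans h1, fun hq => hr''.2 (hq.trans h2)⟩

/-- The hook interval module `H_{p,q}`. -/
def hookFunctor (F : Type) [Field F] (p q : ℕ × ℕ) : (ℕ × ℕ) ⥤ ModuleCat F :=
  intervalFunctor F (hookRegion p q) (fun h1 h2 hr hr'' => hookRegion_convex h1 h2 hr hr'')


def hookSumMap (F : Type) [Field F] (S : Type) (p q : S → ℕ × ℕ) (r r' : ℕ × ℕ) :
    (⨁ (i : S), ↥(intervalPiece F (hookRegion (p i) (q i)) r)) →ₗ[F]
      (⨁ (i : S), ↥(intervalPiece F (hookRegion (p i) (q i)) r')) :=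
  DFinsupp.mapRange.linearMap (fun i => intervalMap F (hookRegion (p i) (q i)) r r')

lemma hookSumMap_refl (F : Type) [Field F] (S : Type) (p q : S → ℕ × ℕ) (r : ℕ × ℕ) :
    hookSumMap F S p q r r = LinearMap.id := by
  have h1 : (fun i => intervalMap F (hookRegion (p i) (q i)) r r) =
      (fun i : S => LinearMap.id) :=
    funext fun i => intervalMap_refl F (hookRegion (p i) (q i)) r
  rw [hookSumMap, h1, DFinsupp.mapRange.linearMap_id]

lemma hookSumMap_trans (F : Type) [Field F] (S : Type) (p q : S → ℕ × ℕ)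
    {r r' r'' : ℕ × ℕ} (h1 : r ≤ r') (h2 : r' ≤ r'') :
    (hookSumMap F S p q r' r'').comp (hookSumMap F S p q r r') = hookSumMap F S p q r r'' := by
  have he : (fun i => intervalMap F (hookRegion (p i) (q i)) r r'') =
      (fun i => (intervalMap F (hookRegion (p i) (q i)) r' r'').comp
        (intervalMap F (hookRegion (p i) (q i)) r r')) :=
    funext fun i =>
      (intervalMap_trans F (hookRegion (p i) (q i))
        (fun a b ha hb => hookRegion_convex a b ha hb) h1 h2).symm
  rw [hookSumMap, hookSumMap, hookSumMap, he, DFinsupp.mapRange.linearMap_comp]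

/-- The direct sum `⊕ᵢ H_{pᵢ,qᵢ}` of hook interval modules, as a persistence module. -/
def hookSumFunctor (F : Type) [Field F] (S : Type) (p q : S → ℕ × ℕ) :
    (ℕ × ℕ) ⥤ ModuleCat F where
  obj r := ModuleCat.of F (⨁ (i : S), ↥(intervalPiece F (hookRegion (p i) (q i)) r))
  map {r r'} _ := ModuleCat.ofHom (hookSumMap F S p q r r')
  map_id r := ModuleCat.hom_ext (hookSumMap_refl F S p q r)
  map_comp {r r' r''} h1 h2 :=
    ModuleCat.hom_ext (hookSumMap_trans F S p q (leOfHom h1) (leOfHom h2)).symm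



lemma monomialClass_zero_iff (F : Type) [Field F] (a c m n : ℕ) :
    monomialClass F a c m n = 0 ↔ (a ≤ m ∧ c ≤ n) := by
  rw [monomialClass, Ideal.Quotient.eq_zero_iff_mem, monomialIdeal, Ideal.mem_span_singleton]
  simp only [X_pow_eq_monomial, monomial_mul, one_mul, monomial_dvd_monomial, one_ne_zero,
    false_or, dvd_refl, and_true]
  constructor
  · intro h
    exact ⟨by simpa using h 0, by simpa using h 1⟩
  · rintro ⟨h1, h2⟩ s
    fin_cases s <;> simp [h1, h2]

def psiAux (F : Type) [Field F] (a c : ℕ) (p r : ℕ × ℕ) :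
    F →ₗ[F] (MvPolynomial (Fin 2) F ⧸ monomialIdeal F a c) :=
  LinearMap.toSpanSingleton F _ (monomialClass F a c (r.1 - p.1) (r.2 - p.2))

lemma intervalPiece_val_eq_zero (F : Type) [Field F] {region : Set (ℕ × ℕ)} {r : ℕ × ℕ}
    (h : r ∉ region) (x : intervalPiece F region r) : (x : F) = 0 := by
  have := x.2
  simpa [intervalPiece, h] using this

lemma psiAux_mapsTo (F : Type) [Field F] (a c : ℕ) (p r : ℕ × ℕ) :
    ∀ x ∈ intervalPiece F (hookRegion p (p + (a, c))) r,
      psiAux F a c p r x ∈ quotientPiece F a c p r := by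
  intro x hx
  by_cases hp : p ≤ r
  · rw [quotientPiece, if_pos hp]
    exact Submodule.smul_mem _ x (Submodule.mem_span_singleton_self _)
  · have hr : r ∉ hookRegion p (p + (a, c)) := fun hh => hp hh.1
    have : x = 0 := by
      have := hx
      simpa [intervalPiece, hr] using this
    simp [this, psiAux, quotientPiece, hp]

def psi (F : Type) [Field F] (a c : ℕ) (p r : ℕ × ℕ) :
    intervalPiece F (hookRegion p (p + (a, c))) r →ₗ[F] quotientPiece F a c p r :=
  (psiAux F a c p r).restrict (psiAux_mapsTo F a c p r)

lemma psi_bijective (F : Type) [Field F] (a c : ℕ) (p r : ℕ × ℕ) :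
    Function.Bijective (psi F a c p r) := by
  classical
  by_cases hr : r ∈ hookRegion p (p + (a, c))
  · obtain ⟨hp, hq⟩ := hr
    simp only [Prod.le_def, Prod.fst_add, Prod.snd_add] at hq
    push_neg at hq
    have hcls : monomialClass F a c (r.1 - p.1) (r.2 - p.2) ≠ 0 := by
      intro h
      rw [monomialClass_zero_iff] at h
      obtain ⟨h1, h2⟩ := h
      have hp1 := hp.1
      have hp2 := hp.2
      by_cases hcase : p.1 + a ≤ r.1
      · have := hq hcase
        omega
      · omega
    constructor
    · intro x y hxy
      have hxy' : (x : F) • monomialClass F a c (r.1 - p.1) (r.2 - p.2) =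
          (y : F) • monomialClass F a c (r.1 - p.1) (r.2 - p.2) := congrArg Subtype.val hxy
      have hsub : ((x : F) - (y : F)) • monomialClass F a c (r.1 - p.1) (r.2 - p.2) = 0 := by
        rw [sub_smul, hxy', sub_self]
      by_cases ht : (x : F) - (y : F) = 0
      · exact Subtype.ext (sub_eq_zero.mp ht)
      · exfalso
        apply hcls
        calc monomialClass F a c (r.1 - p.1) (r.2 - p.2)
            = ((x : F) - (y : F))⁻¹ • (((x : F) - (y : F)) •
                monomialClass F a c (r.1 - p.1) (r.2 - p.2)) := by
              rw [smul_smul, inv_mul_cancel₀ ht, one_smul]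
          _ = 0 := by rw [hsub, smul_zero]
    · rintro ⟨z, hz⟩
      rw [quotientPiece, if_pos hp] at hz
      obtain ⟨k, hk⟩ := Submodule.mem_span_singleton.mp hz
      have hrmem : r ∈ hookRegion p (p + (a, c)) := by
        refine ⟨hp, ?_⟩
        simp only [Prod.le_def, Prod.fst_add, Prod.snd_add]
        push_neg
        exact hq
      refine ⟨⟨k, by simp [intervalPiece, hrmem]⟩, Subtype.ext ?_⟩
      exact hk
  · constructor
    · intro x y _
      have hx := intervalPiece_val_eq_zero F hr x
      have hy := intervalPiece_val_eq_zero F hr y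
      exact Subtype.ext (hx.trans hy.symm)
    · rintro ⟨z, hz⟩
      have hz0 : z = 0 := by
        by_cases hp : p ≤ r
        · have hq : p + (a, c) ≤ r := by
            by_contra hq
            exact hr ⟨hp, hq⟩
          simp only [Prod.le_def, Prod.fst_add, Prod.snd_add] at hq
          have hcls : monomialClass F a c (r.1 - p.1) (r.2 - p.2) = 0 := by
            rw [monomialClass_zero_iff]
            have hp1 := hp.1
            have hp2 := hp.2
            exact ⟨by omega, by omega⟩
          rw [quotientPiece, if_pos hp, hcls] at hz
          simpa using hz
        · rw [quotientPiece, if_neg hp] at hz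
          simpa using hz
      exact ⟨0, Subtype.ext (by simp [hz0, psi, psiAux, LinearMap.restrict_apply])⟩

lemma psi_natural (F : Type) [Field F] (a c : ℕ) (p : ℕ × ℕ) {r r' : ℕ × ℕ} (h : r ≤ r') :
    (quotientPieceMap F a c p h).comp (psi F a c p r) =
      (psi F a c p r').comp (intervalMap F (hookRegion p (p + (a, c))) r r') := by
  classical
  ext x
  show mulMonomial F a c (r'.1 - r.1) (r'.2 - r.2)
      ((x : F) • monomialClass F a c (r.1 - p.1) (r.2 - p.2)) =
    (intervalMapAux F (hookRegion p (p + (a, c))) r' (x : F)) •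
      monomialClass F a c (r'.1 - p.1) (r'.2 - p.2)
  rw [map_smul, mulMonomial_class]
  by_cases hr' : r' ∈ hookRegion p (p + (a, c))
  · rw [intervalMapAux, if_pos hr']
    by_cases hp : p ≤ r
    · rw [Nat.sub_add_sub_cancel h.1 hp.1, Nat.sub_add_sub_cancel h.2 hp.2]
      rfl
    · have hr : r ∉ hookRegion p (p + (a, c)) := fun hh => hp hh.1
      have hx : (x : F) = 0 := intervalPiece_val_eq_zero F hr x
      simp [hx]
  · rw [intervalMapAux, if_neg hr']
    by_cases hr : r ∈ hookRegion p (p + (a, c))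
    · obtain ⟨hp, _⟩ := hr
      have hp' : p ≤ r' := hp.trans h
      have hq' : p + (a, c) ≤ r' := by
        by_contra hq
        exact hr' ⟨hp', hq⟩
      simp only [Prod.le_def, Prod.fst_add, Prod.snd_add] at hq'
      have hcls : monomialClass F a c (r'.1 - r.1 + (r.1 - p.1)) (r'.2 - r.2 + (r.2 - p.2)) = 0 := by
        rw [Nat.sub_add_sub_cancel h.1 hp.1, Nat.sub_add_sub_cancel h.2 hp.2,
          monomialClass_zero_iff]
        have hp1 := hp.1
        have hp2 := hp.2
        exact ⟨by omega, by omega⟩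
      simp [hcls]
    · have hx : (x : F) = 0 := intervalPiece_val_eq_zero F hr x
      simp [hx]


/-- The persistence module associated with the γ-product
`⊕_{i ∈ S} F[x,y]/(x^{aᵢ} y^{cᵢ})(−pᵢ)` is naturally isomorphic to the direct sum of
hook interval modules `⊕_{i ∈ S} H_{pᵢ, pᵢ + (aᵢ, cᵢ)}`; in particular the γ-product is
hook-decomposable. -/
theorem gammaProduct_iso_hookSum (F : Type) [Field F] (S : Type) [Fintype S]
    (a c : S → ℕ) (hac : ∀ i, (a i, c i) ≠ (0, 0)) (p : S → ℕ × ℕ) :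
    Nonempty (gammaProductFunctor F S a c p ≅
      hookSumFunctor F S p (fun i => p i + (a i, c i))) := by
  classical
  refine ⟨Iso.symm ?_⟩
  refine NatIso.ofComponents
    (fun r => (DFinsupp.mapRange.linearEquiv
      (fun i => LinearEquiv.ofBijective (psi F (a i) (c i) (p i) r)
        (psi_bijective F (a i) (c i) (p i) r))).toModuleIso) ?_
  intro r r' h
  have hle : r ≤ r' := leOfHom h
  apply ModuleCat.hom_ext
  apply LinearMap.ext
  intro x
  have key :
      (DFinsupp.mapRange.linearMap (fun i => psi F (a i) (c i) (p i) r')).comp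
          (hookSumMap F S p (fun i => p i + (a i, c i)) r r') =
        (gammaSumMap F S a c p hle).comp
          (DFinsupp.mapRange.linearMap (fun i => psi F (a i) (c i) (p i) r)) := by
    rw [hookSumMap, gammaSumMap, ← DFinsupp.mapRange.linearMap_comp,
      ← DFinsupp.mapRange.linearMap_comp]
    exact congrArg _ (funext fun i => (psi_natural F (a i) (c i) (p i) hle).symm)
  exact congrArg (fun (f : _ →ₗ[F] _) => f x) key

end
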